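/- The family γ = (γ_Λ) satisfies the consistency condition: whenever Λ ⊆ Δ are nonempty finite subsets of ℤ^d, then for every Borel set A ⊆ X and every x ∈ X, ∫_X γ_Λ(A|y) γ_Δ(dy|x) = γ_Δ(A|x). -/

import Mathlib

open MeasureTheory Filter Topology

/-- The full shift configuration space `𝒜^{ℤ^d}`. -/
abbrev Config (d : ℕ) (A : Type*) := (Fin d → ℤ) → A

/-- The shift action of `ℤ^d`: `(T^k x)_i = x_{i+k}`. -/
def shift {d : ℕ} {A : Type*} (k : Fin d → ℤ) (x : Config d A) : Config d A :=
  fun i => x (i + k)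

/-- The ℓ∞ norm of a lattice point, `‖k‖_∞ = max_i |k_i|`. -/
def normInf {d : ℕ} (k : Fin d → ℤ) : ℕ :=
  Finset.univ.sup fun i => (k i).natAbs

/-- The box `Λ_N = {k : ‖k‖_∞ ≤ N}` as a finset. -/
noncomputable def boxF (d N : ℕ) : Finset (Fin d → ℤ) :=
  Finset.Icc (fun _ => -(N : ℤ)) (fun _ => (N : ℤ))

/-- The `n`-th variation of `f` on a subshift `X`:
`δ_n(f) = sup {|f x - f y| : x, y ∈ X, x_{Λ_n} = y_{Λ_n}}`. -/
noncomputable def deltaVar {d : ℕ} {A : Type*} (X : Set (Config d A))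
    (f : Config d A → ℝ) (n : ℕ) : ℝ :=
  sSup {r : ℝ | ∃ x ∈ X, ∃ y ∈ X,
    (∀ k : Fin d → ℤ, normInf k ≤ n → x k = y k) ∧ r = |f x - f y|}

/-- `f` is bounded on `X`. -/
def BoundedOn {d : ℕ} {A : Type*} (X : Set (Config d A)) (f : Config d A → ℝ) : Prop :=
  ∃ C : ℝ, ∀ x ∈ X, |f x| ≤ C

/-- Membership in `SV_d(X)`: bounded with `Σ_{n ≥ 1} n^{d-1} δ_n(f) < ∞`. -/
def MemSV (d : ℕ) {A : Type*} (X : Set (Config d A)) (f : Config d A → ℝ) : Prop :=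
  BoundedOn X f ∧ Summable fun n : ℕ => ((n : ℝ) + 1) ^ (d - 1) * deltaVar X f (n + 1)

/-- The sup norm of `f` over `X`. -/
noncomputable def supNormOn {d : ℕ} {A : Type*} (X : Set (Config d A))
    (f : Config d A → ℝ) : ℝ :=
  sSup {r : ℝ | ∃ x ∈ X, r = |f x|}

/-- The `SV_d` norm: `‖f‖_{SV_d} = ‖f‖_∞ + Σ_{n ≥ 1} n^{d-1} δ_n(f)`. -/
noncomputable def svNorm (d : ℕ) {A : Type*} (X : Set (Config d A))
    (f : Config d A → ℝ) : ℝ :=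
  supNormOn X f + ∑' n : ℕ, ((n : ℝ) + 1) ^ (d - 1) * deltaVar X f (n + 1)

/-- The Gibbs relation `𝔗`: pairs of points of `X` that agree outside a finite set. -/
def gibbsRel {d : ℕ} {A : Type*} (X : Set (Config d A)) :
    Set (Config d A × Config d A) :=
  {p | p.1 ∈ X ∧ p.2 ∈ X ∧ ∃ Λ : Finset (Fin d → ℤ), ∀ k ∉ Λ, p.1 k = p.2 k}

/-- The cocycle `φ_f(x,y) = Σ_{k ∈ ℤ^d} (f(T^k y) - f(T^k x))` (unordered sum). -/
noncomputable def phiF {d : ℕ} {A : Type*} (f : Config d A → ℝ)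
    (x y : Config d A) : ℝ :=
  ∑' k : Fin d → ℤ, (f (shift k y) - f (shift k x))

/-- Membership in `𝓕(X)`: homeomorphisms of `X` changing only finitely many coordinates,
uniformly. -/
def memF {d : ℕ} {A : Type*} [TopologicalSpace A] (X : Set (Config d A))
    (φ : ↥X ≃ₜ ↥X) : Prop :=
  ∃ n : ℕ, 1 ≤ n ∧ ∀ x : ↥X, ∀ k : Fin d → ℤ, n < normInf k → (φ x).1 k = x.1 k

/-- `𝓕_n(X)`. -/
def Fn {d : ℕ} {A : Type*} [TopologicalSpace A] (X : Set (Config d A)) (n : ℕ) :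
    Set (↥X ≃ₜ ↥X) :=
  {φ | (∀ x : ↥X, ∀ k : Fin d → ℤ, n < normInf k → (φ x).1 k = x.1 k) ∧
    ∀ x y : ↥X,
      ((∀ k : Fin d → ℤ, normInf k ≤ n → x.1 k = y.1 k) ↔
        (∀ k : Fin d → ℤ, normInf k ≤ n → (φ x).1 k = (φ y).1 k))}

/-- The configuration `ω x_{Λ^c}`: equal to `ω` on `Λ` and to `x` off `Λ`. -/
def patch {d : ℕ} {A : Type*} (Λ : Finset (Fin d → ℤ)) (ω : {k // k ∈ Λ} → A)
    (x : Config d A) : Config d A :=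
  fun k => if h : k ∈ Λ then ω ⟨k, h⟩ else x k

/-- `f_n = Σ_{i ∈ Λ_n} f ∘ T^i`. -/
noncomputable def fnSum (d : ℕ) {A : Type*} (f : Config d A → ℝ) (n : ℕ)
    (z : Config d A) : ℝ :=
  ∑ i ∈ boxF d n, f (shift i z)

/-- The σ-algebra `𝓕_Δ` on `X`, generated by the coordinate projections `x ↦ x_i`, `i ∈ Δ`. -/
def cylSigma {d : ℕ} {A : Type*} [MeasurableSpace A] (X : Set (Config d A))
    (Δ : Set (Fin d → ℤ)) : MeasurableSpace ↥X :=
  MeasurableSpace.comap (fun (x : ↥X) (i : ↥Δ) => x.1 i.1) MeasurableSpace.pi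

/-- `μ` is a Gibbs measure for `f`: `(φ_f, 𝔗)`-conformal. -/
def IsGibbs (d : ℕ) {A : Type*} [MeasurableSpace A] (X : Set (Config d A))
    (f : Config d A → ℝ) (μ : Measure ↥X) : Prop :=
  ∀ V W : ↥X → ↥X, Measurable V → Measurable W →
    (∀ x, W (V x) = x) → (∀ x, V (W x) = x) →
    (∀ x : ↥X, ((x.1, (V x).1) ∈ gibbsRel X)) →
    (Measure.map V μ ≪ μ ∧
      ∀ᵐ x ∂μ, (Measure.map V μ).rnDeriv μ x
        = ENNReal.ofReal (Real.exp (phiF f x.1 (W x).1)))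

/-- `μ` is a topological Gibbs measure for `f`: `(φ_f|_{𝔗⁰}, 𝔗⁰)`-conformal. -/
def IsTopGibbs (d : ℕ) {A : Type*} [TopologicalSpace A] [MeasurableSpace A]
    (X : Set (Config d A)) (f : Config d A → ℝ) (μ : Measure ↥X) : Prop :=
  ∀ φ : ↥X ≃ₜ ↥X, memF X φ →
    (Measure.map (⇑φ) μ ≪ μ ∧
      ∀ᵐ x ∂μ, (Measure.map (⇑φ) μ).rnDeriv μ x
        = ENNReal.ofReal (Real.exp (phiF f x.1 (φ.symm x).1)))

/-- Finite-volume Gibbsian ratios defining the kernel `γ_Λ`. -/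
noncomputable def gammaFn (d : ℕ) {A : Type*} [Fintype A] (X : Set (Config d A))
    (f : Config d A → ℝ) (Λ : Finset (Fin d → ℤ)) (S : Set ↥X) (x : Config d A)
    (n : ℕ) : ℝ :=
  (∑ ω : {k // k ∈ Λ} → A,
      (Subtype.val '' S).indicator (fun z => Real.exp (fnSum d f n z)) (patch Λ ω x)) /
  (∑ η : {k // k ∈ Λ} → A,
      X.indicator (fun z => Real.exp (fnSum d f n z)) (patch Λ η x))

/-- The kernel `γ_Λ(S | x)`, defined as the limit of the finite-volume ratios. -/
noncomputable def gamma (d : ℕ) {A : Type*} [Fintype A] (X : Set (Config d A))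
    (f : Config d A → ℝ) (Λ : Finset (Fin d → ℤ)) (S : Set ↥X) (x : Config d A) : ℝ :=
  limUnder atTop (gammaFn d X f Λ S x)

/-- `X` is a subshift of finite type. -/
def IsSFT {d : ℕ} {A : Type*} (X : Set (Config d A)) : Prop :=
  ∃ n : ℕ, 1 ≤ n ∧ ∃ F : Set ({k : Fin d → ℤ // normInf k ≤ n} → A),
    X = {x : Config d A |
      ∀ l : Fin d → ℤ, (fun k : {k : Fin d → ℤ // normInf k ≤ n} => shift l x k.1) ∉ F}

/-- The topological Gibbs relation `𝔗⁰`. -/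
def topGibbsRel {d : ℕ} {A : Type*} [TopologicalSpace A] (X : Set (Config d A)) :
    Set (Config d A × Config d A) :=
  {p | ∃ (hx : p.1 ∈ X) (φ : ↥X ≃ₜ ↥X), memF X φ ∧ (φ ⟨p.1, hx⟩).1 = p.2}

/-- `f` is a local function on `X`. -/
def IsLocal {d : ℕ} {A : Type*} (X : Set (Config d A)) (f : Config d A → ℝ) : Prop :=
  ∃ Λ : Finset (Fin d → ℤ), ∀ x ∈ X, ∀ y ∈ X, (∀ k ∈ Λ, x k = y k) → f x = f y

set_option linter.unusedSectionVars false
set_option maxHeartbeats 1000000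

section AUX

lemma normInf_le_iff {d : ℕ} {k : Fin d → ℤ} {n : ℕ} :
    normInf k ≤ n ↔ ∀ i, (k i).natAbs ≤ n := by
  simp [normInf, Finset.sup_le_iff]

lemma mem_boxF {d N : ℕ} {k : Fin d → ℤ} : k ∈ boxF d N ↔ normInf k ≤ N := by
  simp only [boxF, Finset.mem_Icc, normInf_le_iff, Pi.le_def]
  constructor
  · rintro ⟨h1, h2⟩ i; have := h1 i; have := h2 i; omega
  · intro h; constructor <;> intro i <;> have := h i <;> omega

lemma boxF_mono {d : ℕ} : Monotone (boxF d) := by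
  intro m n hmn
  intro k hk; rw [mem_boxF] at *; omega

lemma boxF_card {d N : ℕ} : (boxF d N).card = (2 * N + 1) ^ d := by
  rw [boxF, Pi.card_Icc]
  simp [Int.card_Icc]
  congr 1; omega

lemma normInf_add_le {d : ℕ} (a b : Fin d → ℤ) : normInf (a + b) ≤ normInf a + normInf b := by
  rw [normInf_le_iff]; intro i
  have ha : (a i).natAbs ≤ normInf a := Finset.le_sup (f := fun i => (a i).natAbs) (Finset.mem_univ i)
  have hb : (b i).natAbs ≤ normInf b := Finset.le_sup (f := fun i => (b i).natAbs) (Finset.mem_univ i)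
  have := Int.natAbs_add_le (a i) (b i)
  simpa using this.trans (by omega)

lemma le_normInf_add {d : ℕ} (a b : Fin d → ℤ) : normInf a ≤ normInf (a + b) + normInf b := by
  have := normInf_add_le (a + b) (-b)
  have h2 : a + b + -b = a := by ring
  rw [h2] at this
  have h3 : normInf (-b) = normInf b := by
    unfold normInf; congr 1; funext i; simp
  omega

section Delta
variable {d : ℕ} {A : Type*} {X : Set (Config d A)} {f : Config d A → ℝ}

lemma delta_set_bdd {n : ℕ} {C : ℝ} (hC : ∀ x ∈ X, |f x| ≤ C) :
    ∀ r ∈ {r : ℝ | ∃ x ∈ X, ∃ y ∈ X,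
      (∀ k : Fin d → ℤ, normInf k ≤ n → x k = y k) ∧ r = |f x - f y|}, r ≤ 2 * C := by
  rintro r ⟨x, hx, y, hy, -, rfl⟩
  have := hC x hx; have := hC y hy
  have := abs_sub_abs_le_abs_sub (f x) (f y)
  have h2 := abs_sub (f x) (f y)
  calc |f x - f y| ≤ |f x| + |f y| := h2
    _ ≤ 2 * C := by linarith

lemma delta_bound (hf : BoundedOn X f) {n : ℕ} {x y : Config d A} (hx : x ∈ X) (hy : y ∈ X)
    (h : ∀ k : Fin d → ℤ, normInf k ≤ n → x k = y k) :
    |f x - f y| ≤ deltaVar X f n := by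
  obtain ⟨C, hC⟩ := hf
  exact le_csSup ⟨2 * C, fun r hr => delta_set_bdd hC r hr⟩ ⟨x, hx, y, hy, h, rfl⟩

lemma delta_nonneg (hf : BoundedOn X f) (hne : X.Nonempty) (n : ℕ) :
    0 ≤ deltaVar X f n := by
  obtain ⟨x, hx⟩ := hne
  have := delta_bound (n := n) hf hx hx (fun k _ => rfl)
  simp only [sub_self, abs_zero] at this
  exact this

lemma delta_antitone (hf : BoundedOn X f) (hne : X.Nonempty) : Antitone (deltaVar X f) := by
  intro m n hmn
  obtain ⟨C, hC⟩ := hf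
  obtain ⟨x, hx⟩ := hne
  apply csSup_le_csSup ⟨2 * C, fun r hr => delta_set_bdd hC r hr⟩
  · exact ⟨0, x, hx, x, hx, fun _ _ => rfl, by simp⟩
  · rintro r ⟨a, ha, b, hb, hab, rfl⟩
    exact ⟨a, ha, b, hb, fun k hk => hab k (hk.trans hmn), rfl⟩
end Delta

lemma pow_sub_pow_le_real : ∀ (d : ℕ) (a b : ℝ), 0 ≤ b → b ≤ a →
    a ^ d - b ^ d ≤ d * (a - b) * a ^ (d - 1) := by
  intro d
  induction d with
  | zero => intro a b _ _; simp
  | succ e ih =>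
    intro a b hb hba
    have ha : 0 ≤ a := hb.trans hba
    rcases Nat.eq_zero_or_pos e with he | he
    · subst he; simp
    · have h1 : a ^ (e + 1) - b ^ (e + 1) = a * (a ^ e - b ^ e) + (a - b) * b ^ e := by
        ring
      have h2 : a * (a ^ e - b ^ e) ≤ a * (e * (a - b) * a ^ (e - 1)) :=
        mul_le_mul_of_nonneg_left (ih a b hb hba) ha
      have h3 : a * (e * (a - b) * a ^ (e - 1)) = e * (a - b) * a ^ e := by
        rw [show (e : ℕ) = (e - 1) + 1 by omega]
        push_cast
        ring
      have h4 : (a - b) * b ^ e ≤ (a - b) * a ^ e :=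
        mul_le_mul_of_nonneg_left (pow_le_pow_left₀ hb hba e) (by linarith)
      have h5 : (e + 1 : ℕ) - 1 = e := rfl
      rw [h5]
      push_cast
      nlinarith [pow_nonneg ha e]

section Summ
variable {d : ℕ} {A : Type*} {X : Set (Config d A)} {f : Config d A → ℝ}
  {z y : Config d A} {Λ : Finset (Fin d → ℤ)}

lemma shift_mem_agree (hag : ∀ k ∉ Λ, z k = y k) {i : Fin d → ℤ} {t : ℕ}
    (hi : Λ.sup normInf + t + 2 ≤ normInf i) :
    ∀ k : Fin d → ℤ, normInf k ≤ t + 1 → shift i z k = shift i y k := by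
  intro k hk
  show z (k + i) = y (k + i)
  apply hag
  intro hmem
  have hR : normInf (k + i) ≤ Λ.sup normInf :=
    Finset.le_sup (f := normInf) hmem
  have := le_normInf_add i k
  rw [add_comm i k] at this
  omega

lemma abs_diff_le_delta (hb : BoundedOn X f)
    (hinv : ∀ k : Fin d → ℤ, ∀ x ∈ X, shift k x ∈ X)
    (hz : z ∈ X) (hy : y ∈ X) (hag : ∀ k ∉ Λ, z k = y k) {i : Fin d → ℤ} {t : ℕ}
    (hi : Λ.sup normInf + t + 2 ≤ normInf i) :
    |f (shift i z) - f (shift i y)| ≤ deltaVar X f (t + 1) :=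
  delta_bound hb (hinv i z hz) (hinv i y hy) (shift_mem_agree hag hi)

lemma sum_abs_diff_le (hne : X.Nonempty) (hf : MemSV d X f)
    (hinv : ∀ k : Fin d → ℤ, ∀ x ∈ X, shift k x ∈ X)
    (hz : z ∈ X) (hy : y ∈ X) (hag : ∀ k ∉ Λ, z k = y k) :
    ∃ K : ℝ, ∀ u : Finset (Fin d → ℤ),
      ∑ i ∈ u, |f (shift i z) - f (shift i y)| ≤ K := by
  obtain ⟨C, hC⟩ := hf.1
  set R := Λ.sup normInf with hR
  set T := ∑' n : ℕ, ((n : ℝ) + 1) ^ (d - 1) * deltaVar X f (n + 1) with hT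
  set g := fun i : Fin d → ℤ => |f (shift i z) - f (shift i y)| with hg
  have hgnn : ∀ i, 0 ≤ g i := fun i => abs_nonneg _
  have hC0 : 0 ≤ C := le_trans (abs_nonneg _) (hC z hz)
  have hg2C : ∀ i, g i ≤ 2 * C := by
    intro i
    have h1 := hC _ (hinv i z hz)
    have h2 := hC _ (hinv i y hy)
    calc g i ≤ |f (shift i z)| + |f (shift i y)| := abs_sub _ _
      _ ≤ 2 * C := by linarith
  set K₁ : ℝ := ((2 * (R + 1) + 1 : ℕ) : ℝ) ^ d * (2 * C) with hK₁
  set c : ℝ := (2 * d : ℝ) * (2 * R + 5 : ℝ) ^ (d - 1) with hc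
  have hc0 : 0 ≤ c := by positivity
  -- step A
  have hA : ∀ N, N ≤ R + 1 → ∑ i ∈ boxF d N, g i ≤ K₁ := by
    intro N hN
    calc ∑ i ∈ boxF d N, g i ≤ (boxF d N).card • (2 * C) :=
          Finset.sum_le_card_nsmul _ _ _ (fun i _ => hg2C i)
      _ = ((2 * N + 1 : ℕ) : ℝ) ^ d * (2 * C) := by
          rw [boxF_card]; push_cast [nsmul_eq_mul]; ring
      _ ≤ K₁ := by
          rw [hK₁]
          apply mul_le_mul_of_nonneg_right _ (by linarith)
          apply pow_le_pow_left₀ (by positivity)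
          exact Nat.cast_le.mpr (by omega)
  -- step B
  have hB : ∀ t : ℕ, ∑ i ∈ boxF d (R + 1 + t), g i ≤
      K₁ + c * ∑ m ∈ Finset.range t, ((m : ℝ) + 1) ^ (d - 1) * deltaVar X f (m + 1) := by
    intro t
    induction t with
    | zero => simpa using hA (R + 1) le_rfl
    | succ t ih =>
      have hsub : boxF d (R + 1 + t) ⊆ boxF d (R + 1 + (t + 1)) := boxF_mono (by omega)
      have hsplit : ∑ i ∈ boxF d (R + 1 + (t + 1)), g i =
          ∑ i ∈ boxF d (R + 1 + t), g i +
          ∑ i ∈ boxF d (R + 1 + (t + 1)) \ boxF d (R + 1 + t), g i := by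
        rw [add_comm (∑ i ∈ boxF d (R + 1 + t), g i)]
        exact (Finset.sum_sdiff hsub).symm
      have hdbound : ∀ i ∈ boxF d (R + 1 + (t + 1)) \ boxF d (R + 1 + t),
          g i ≤ deltaVar X f (t + 1) := by
        intro i hi
        rw [Finset.mem_sdiff, mem_boxF, mem_boxF] at hi
        exact abs_diff_le_delta hf.1 hinv hz hy hag (by omega)
      have hcard : ((boxF d (R + 1 + (t + 1)) \ boxF d (R + 1 + t)).card : ℝ) ≤
          c * ((t : ℝ) + 1) ^ (d - 1) := by
        rw [Finset.card_sdiff_of_subset hsub, boxF_card, boxF_card]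
        have hle : (2 * (R + 1 + t) + 1) ^ d ≤ (2 * (R + 1 + (t + 1)) + 1) ^ d :=
          Nat.pow_le_pow_left (by omega) d
        rw [Nat.cast_sub hle]
        push_cast
        set a : ℝ := 2 * ((R : ℝ) + 1 + ((t : ℝ) + 1)) + 1 with ha
        set b : ℝ := 2 * ((R : ℝ) + 1 + (t : ℝ)) + 1 with hb
        have h1 : a ^ d - b ^ d ≤ (d : ℝ) * (a - b) * a ^ (d - 1) :=
          pow_sub_pow_le_real d a b (by positivity) (by rw [ha, hb]; push_cast; linarith)
        have hab : a - b = 2 := by rw [ha, hb]; ring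
        have h2 : a ≤ (2 * (R : ℝ) + 5) * ((t : ℝ) + 1) := by
          rw [ha]; nlinarith [Nat.cast_nonneg (α := ℝ) R, Nat.cast_nonneg (α := ℝ) t]
        have h3 : a ^ (d - 1) ≤ ((2 * (R : ℝ) + 5) * ((t : ℝ) + 1)) ^ (d - 1) :=
          pow_le_pow_left₀ (by positivity) h2 _
        rw [mul_pow] at h3
        rw [hc]
        calc a ^ d - b ^ d ≤ (d : ℝ) * 2 * a ^ (d - 1) := by rw [hab] at h1; linarith
          _ ≤ (d : ℝ) * 2 * ((2 * (R : ℝ) + 5) ^ (d - 1) * ((t : ℝ) + 1) ^ (d - 1)) := by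
              apply mul_le_mul_of_nonneg_left h3 (by positivity)
          _ = 2 * (d : ℝ) * (2 * (R : ℝ) + 5) ^ (d - 1) * ((t : ℝ) + 1) ^ (d - 1) := by ring
      have hdelta0 : 0 ≤ deltaVar X f (t + 1) := delta_nonneg hf.1 hne _
      have hsdiff : ∑ i ∈ boxF d (R + 1 + (t + 1)) \ boxF d (R + 1 + t), g i ≤
          c * (((t : ℝ) + 1) ^ (d - 1) * deltaVar X f (t + 1)) := by
        calc ∑ i ∈ boxF d (R + 1 + (t + 1)) \ boxF d (R + 1 + t), g i
            ≤ (boxF d (R + 1 + (t + 1)) \ boxF d (R + 1 + t)).card • deltaVar X f (t + 1) :=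
              Finset.sum_le_card_nsmul _ _ _ hdbound
          _ = ((boxF d (R + 1 + (t + 1)) \ boxF d (R + 1 + t)).card : ℝ) * deltaVar X f (t + 1) := by
              rw [nsmul_eq_mul]
          _ ≤ c * ((t : ℝ) + 1) ^ (d - 1) * deltaVar X f (t + 1) :=
              mul_le_mul_of_nonneg_right hcard hdelta0
          _ = c * (((t : ℝ) + 1) ^ (d - 1) * deltaVar X f (t + 1)) := by ring
      rw [hsplit, Finset.sum_range_succ, mul_add]
      linarith
  refine ⟨K₁ + c * T, ?_⟩
  intro u
  set N := u.sup normInf with hN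
  have hu : u ⊆ boxF d (R + 1 + N) := by
    intro i hi
    rw [mem_boxF]
    have : normInf i ≤ N := Finset.le_sup (f := normInf) hi
    omega
  have h1 : ∑ i ∈ u, g i ≤ ∑ i ∈ boxF d (R + 1 + N), g i :=
    Finset.sum_le_sum_of_subset_of_nonneg hu (fun i _ _ => hgnn i)
  have h2 := hB N
  have h3 : ∑ m ∈ Finset.range N, ((m : ℝ) + 1) ^ (d - 1) * deltaVar X f (m + 1) ≤ T :=
    Summable.sum_le_tsum _ (fun m _ => mul_nonneg (by positivity) (delta_nonneg hf.1 hne _)) hf.2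
  have := mul_le_mul_of_nonneg_left h3 hc0
  linarith

lemma summable_diff (hne : X.Nonempty) (hf : MemSV d X f)
    (hinv : ∀ k : Fin d → ℤ, ∀ x ∈ X, shift k x ∈ X)
    (hz : z ∈ X) (hy : y ∈ X) (hag : ∀ k ∉ Λ, z k = y k) :
    Summable (fun i : Fin d → ℤ => f (shift i z) - f (shift i y)) := by
  obtain ⟨K, hK⟩ := sum_abs_diff_le hne hf hinv hz hy hag
  exact (summable_of_sum_le (fun i => abs_nonneg _) hK).of_abs

lemma tendsto_fnSum_diff (hne : X.Nonempty) (hf : MemSV d X f)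
    (hinv : ∀ k : Fin d → ℤ, ∀ x ∈ X, shift k x ∈ X)
    (hz : z ∈ X) (hy : y ∈ X) (hag : ∀ k ∉ Λ, z k = y k) :
    Tendsto (fun n => fnSum d f n z - fnSum d f n y) atTop
      (𝓝 (∑' i : Fin d → ℤ, (f (shift i z) - f (shift i y)))) := by
  have hs := summable_diff hne hf hinv hz hy hag
  have hbox : Tendsto (boxF d) atTop atTop :=
    tendsto_atTop_finset_of_monotone boxF_mono (fun i => ⟨normInf i, mem_boxF.2 le_rfl⟩)
  have := hs.hasSum.comp hbox
  convert this using 1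
  funext n
  simp [fnSum, Function.comp, Finset.sum_sub_distrib]
end Summ

noncomputable def Dlim {d : ℕ} {A : Type*} (f : Config d A → ℝ) (z y : Config d A) : ℝ :=
  ∑' i : Fin d → ℤ, (f (shift i z) - f (shift i y))

noncomputable def Glim (d : ℕ) {A : Type*} [Fintype A] (X : Set (Config d A))
    (f : Config d A → ℝ) (Λ : Finset (Fin d → ℤ)) (S : Set ↥X) (y : Config d A) : ℝ :=
  (∑ ω : {k // k ∈ Λ} → A,
      (Subtype.val '' S).indicator (fun z => Real.exp (Dlim f z y)) (patch Λ ω y)) /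
  (∑ η : {k // k ∈ Λ} → A,
      X.indicator (fun z => Real.exp (Dlim f z y)) (patch Λ η y))

section Conv
variable {d : ℕ} {A : Type*} [Fintype A] {X : Set (Config d A)} {f : Config d A → ℝ}
  {y : Config d A} {Λ : Finset (Fin d → ℤ)}

lemma patch_eq_self (Λ : Finset (Fin d → ℤ)) (y : Config d A) :
    patch Λ (fun k => y k.1) y = y := by
  funext k; unfold patch; split <;> rfl

lemma patch_agree (Λ : Finset (Fin d → ℤ)) (ω : {k // k ∈ Λ} → A) (y : Config d A) :
    ∀ k ∉ Λ, patch Λ ω y k = y k := by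
  intro k hk; unfold patch; rw [dif_neg hk]

omit [Fintype A] in
lemma Dlim_self (f : Config d A → ℝ) (y : Config d A) : Dlim f y y = 0 := by
  unfold Dlim; simp

lemma Glim_den_pos (hy : y ∈ X) :
    0 < ∑ η : {k // k ∈ Λ} → A,
      X.indicator (fun z => Real.exp (Dlim f z y)) (patch Λ η y) := by
  apply Finset.sum_pos' (fun η _ => Set.indicator_nonneg (fun z _ => (Real.exp_pos _).le) _)
  refine ⟨fun k => y k.1, Finset.mem_univ _, ?_⟩
  rw [patch_eq_self, Set.indicator_of_mem hy, Dlim_self]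
  simpa using Real.exp_pos 0

lemma tendsto_gammaFn (hne : X.Nonempty) (hf : MemSV d X f)
    (hinv : ∀ k : Fin d → ℤ, ∀ x ∈ X, shift k x ∈ X)
    (hy : y ∈ X) (S : Set ↥X) :
    Tendsto (gammaFn d X f Λ S y) atTop (𝓝 (Glim d X f Λ S y)) := by
  have hterm : ∀ (s : Set (Config d A)), s ⊆ X → ∀ ω : {k // k ∈ Λ} → A,
      Tendsto (fun n => s.indicator
          (fun z => Real.exp (fnSum d f n z - fnSum d f n y)) (patch Λ ω y)) atTop
        (𝓝 (s.indicator (fun z => Real.exp (Dlim f z y)) (patch Λ ω y))) := by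
    intro s hs ω
    by_cases h : patch Λ ω y ∈ s
    · simp only [Set.indicator_of_mem h]
      exact (Real.continuous_exp.tendsto _).comp
        (tendsto_fnSum_diff hne hf hinv (hs h) hy (patch_agree Λ ω y))
    · simp only [Set.indicator_of_notMem h]
      exact tendsto_const_nhds
  have hrw : ∀ n, gammaFn d X f Λ S y n =
      (∑ ω : {k // k ∈ Λ} → A, (Subtype.val '' S).indicator
          (fun z => Real.exp (fnSum d f n z - fnSum d f n y)) (patch Λ ω y)) /
      (∑ η : {k // k ∈ Λ} → A, X.indicator
          (fun z => Real.exp (fnSum d f n z - fnSum d f n y)) (patch Λ η y)) := by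
    intro n
    unfold gammaFn
    have key : ∀ (s : Set (Config d A)) (p : Config d A),
        s.indicator (fun z => Real.exp (fnSum d f n z)) p =
        s.indicator (fun z => Real.exp (fnSum d f n z - fnSum d f n y)) p *
          Real.exp (fnSum d f n y) := by
      intro s p
      by_cases h : p ∈ s
      · rw [Set.indicator_of_mem h, Set.indicator_of_mem h, Real.exp_sub,
          div_mul_cancel₀ _ (Real.exp_ne_zero _)]
      · rw [Set.indicator_of_notMem h, Set.indicator_of_notMem h, zero_mul]
    simp_rw [key, ← Finset.sum_mul]
    rw [mul_div_mul_right _ _ (Real.exp_ne_zero _)]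
  simp_rw [funext hrw]
  exact Tendsto.div
    (tendsto_finset_sum _ (fun ω _ => hterm _ (by rintro z ⟨w, -, rfl⟩; exact w.2) ω))
    (tendsto_finset_sum _ (fun η _ => hterm X subset_rfl η))
    (ne_of_gt (Glim_den_pos hy))

lemma gamma_eq_Glim (hne : X.Nonempty) (hf : MemSV d X f)
    (hinv : ∀ k : Fin d → ℤ, ∀ x ∈ X, shift k x ∈ X)
    (hy : y ∈ X) (S : Set ↥X) :
    gamma d X f Λ S y = Glim d X f Λ S y :=
  (tendsto_gammaFn hne hf hinv hy S).limUnder_eq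
end Conv

section Algebra
variable {d : ℕ} {A : Type*} [Fintype A] {X : Set (Config d A)} {f : Config d A → ℝ}
  {Λ Δ : Finset (Fin d → ℤ)}

def resDiff (Λ Δ : Finset (Fin d → ℤ)) (ω : {k // k ∈ Δ} → A) :
    {k // k ∈ Δ \ Λ} → A :=
  fun m => ω ⟨m.1, (Finset.mem_sdiff.1 m.2).1⟩

def combine (Λ Δ : Finset (Fin d → ℤ)) (η : {k // k ∈ Λ} → A)
    (τ : {k // k ∈ Δ \ Λ} → A) : {k // k ∈ Δ} → A :=
  fun k => if h : k.1 ∈ Λ then η ⟨k.1, h⟩ else τ ⟨k.1, Finset.mem_sdiff.2 ⟨k.2, h⟩⟩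

lemma resDiff_combine (η : {k // k ∈ Λ} → A) (τ : {k // k ∈ Δ \ Λ} → A) :
    resDiff Λ Δ (combine Λ Δ η τ) = τ := by
  funext m
  have hm := Finset.mem_sdiff.1 m.2
  simp only [resDiff, combine, dif_neg hm.2]

def combEquiv (Λ Δ : Finset (Fin d → ℤ)) (hΛΔ : Λ ⊆ Δ) :
    (({k // k ∈ Λ} → A) × ({k // k ∈ Δ \ Λ} → A)) ≃ ({k // k ∈ Δ} → A) where
  toFun p := combine Λ Δ p.1 p.2
  invFun ω := (fun l => ω ⟨l.1, hΛΔ l.2⟩, resDiff Λ Δ ω)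
  left_inv p := by
    ext l
    · simp only [combine, dif_pos l.2]
    · exact congrFun (resDiff_combine p.1 p.2) _
  right_inv ω := by
    funext k
    by_cases h : k.1 ∈ Λ
    · simp only [combine, dif_pos h]
    · simp only [combine, resDiff, dif_neg h]

lemma patch_patch (hΛΔ : Λ ⊆ Δ) (η : {k // k ∈ Λ} → A) (ω : {k // k ∈ Δ} → A)
    (x : Config d A) :
    patch Λ η (patch Δ ω x) = patch Δ (combine Λ Δ η (resDiff Λ Δ ω)) x := by
  funext k
  by_cases hL : k ∈ Λ
  · simp only [patch, dif_pos hL, dif_pos (hΛΔ hL), combine]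
  · by_cases hD : k ∈ Δ
    · simp only [patch, dif_neg hL, dif_pos hD, combine, resDiff]
    · simp only [patch, dif_neg hL, dif_neg hD]

lemma patch_inj {ω ω' : {k // k ∈ Δ} → A} {x : Config d A}
    (h : patch Δ ω x = patch Δ ω' x) : ω = ω' := by
  funext k
  have := congrFun h k.1
  simpa only [patch, dif_pos k.2] using this

lemma key_sum (hΛΔ : Λ ⊆ Δ) (x : Config d A) (S : Set ↥X) (n : ℕ) :
    ∑ ω : {k // k ∈ Δ} → A,
        X.indicator (fun z => Real.exp (fnSum d f n z)) (patch Δ ω x) *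
          gammaFn d X f Λ S (patch Δ ω x) n =
      ∑ ω : {k // k ∈ Δ} → A,
        (Subtype.val '' S).indicator (fun z => Real.exp (fnSum d f n z)) (patch Δ ω x) := by
  set E : Config d A → ℝ := fun z => Real.exp (fnSum d f n z) with hE
  rw [← Equiv.sum_comp (combEquiv Λ Δ hΛΔ)
    (fun ω => X.indicator E (patch Δ ω x) * gammaFn d X f Λ S (patch Δ ω x) n),
    ← Equiv.sum_comp (combEquiv Λ Δ hΛΔ)
    (fun ω => (Subtype.val '' S).indicator E (patch Δ ω x))]
  rw [Fintype.sum_prod_type, Fintype.sum_prod_type]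
  rw [Finset.sum_comm]
  conv_rhs => rw [Finset.sum_comm]
  apply Finset.sum_congr rfl
  intro τ _
  set Nτ := ∑ η' : {k // k ∈ Λ} → A,
    (Subtype.val '' S).indicator E (patch Δ (combine Λ Δ η' τ) x) with hNτ
  set Zτ := ∑ η' : {k // k ∈ Λ} → A,
    X.indicator E (patch Δ (combine Λ Δ η' τ) x) with hZτ
  have hgam : ∀ η : {k // k ∈ Λ} → A,
      gammaFn d X f Λ S (patch Δ (combEquiv Λ Δ hΛΔ (η, τ)) x) n = Nτ / Zτ := by
    intro η
    unfold gammaFn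
    congr 1
    · apply Finset.sum_congr rfl
      intro η' _
      rw [patch_patch hΛΔ,
        show resDiff Λ Δ ((combEquiv Λ Δ hΛΔ) (η, τ)) = τ from resDiff_combine η τ]
    · apply Finset.sum_congr rfl
      intro η' _
      rw [patch_patch hΛΔ,
        show resDiff Λ Δ ((combEquiv Λ Δ hΛΔ) (η, τ)) = τ from resDiff_combine η τ]
  calc ∑ η : {k // k ∈ Λ} → A,
        X.indicator E (patch Δ (combEquiv Λ Δ hΛΔ (η, τ)) x) *
          gammaFn d X f Λ S (patch Δ (combEquiv Λ Δ hΛΔ (η, τ)) x) n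
      = ∑ η : {k // k ∈ Λ} → A,
        X.indicator E (patch Δ (combine Λ Δ η τ) x) * (Nτ / Zτ) := by
        apply Finset.sum_congr rfl
        intro η _
        rw [hgam η]
        rfl
    _ = Zτ * (Nτ / Zτ) := by rw [← Finset.sum_mul]
    _ = Nτ := by
        by_cases hZ : Zτ = 0
        · rw [hZ, zero_mul]
          symm
          rw [hNτ]
          apply Finset.sum_eq_zero
          intro η' _
          by_cases hmem : patch Δ (combine Λ Δ η' τ) x ∈ Subtype.val '' S
          · exfalso
            have hX : patch Δ (combine Λ Δ η' τ) x ∈ X := by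
              obtain ⟨w, -, hw⟩ := hmem; rw [← hw]; exact w.2
            have hnn : ∀ η'' : {k // k ∈ Λ} → A,
                0 ≤ X.indicator E (patch Δ (combine Λ Δ η'' τ) x) :=
              fun η'' => Set.indicator_nonneg (fun z _ => (Real.exp_pos _).le) _
            have := (Finset.sum_eq_zero_iff_of_nonneg (fun η'' _ => hnn η'')).1
              (hZτ ▸ hZ) η' (Finset.mem_univ _)
            rw [Set.indicator_of_mem hX] at this
            exact (Real.exp_pos _).ne' this
          · rw [Set.indicator_of_notMem hmem]
        · exact mul_div_cancel₀ _ hZ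
    _ = ∑ η : {k // k ∈ Λ} → A,
        (Subtype.val '' S).indicator E (patch Δ (combEquiv Λ Δ hΛΔ (η, τ)) x) := rfl
end Algebra

section Consist
variable {d : ℕ} {A : Type*} [Fintype A] {X : Set (Config d A)} {f : Config d A → ℝ}
  {Λ Δ : Finset (Fin d → ℤ)}

open Classical in
noncomputable def FsF (X : Set (Config d A)) (Δ : Finset (Fin d → ℤ)) (x : Config d A) :
    Finset ↥X :=
  ((Finset.univ : Finset ({k // k ∈ Δ} → A)).filter (fun ω => patch Δ ω x ∈ X)).attach.image
    (fun ω => (⟨patch Δ ω.1 x, by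
      have h := ω.2; rw [Finset.mem_filter] at h; exact h.2⟩ : ↥X))

lemma mem_FsF {x : Config d A} {z : ↥X} :
    z ∈ FsF X Δ x ↔ ∃ ω : {k // k ∈ Δ} → A, patch Δ ω x = z.1 := by
  classical
  unfold FsF
  simp only [Finset.mem_image, Finset.mem_attach, true_and, Subtype.exists]
  constructor
  · rintro ⟨ω, hω, rfl⟩
    exact ⟨ω, rfl⟩
  · rintro ⟨ω, hω⟩
    refine ⟨ω, Finset.mem_filter.2 ⟨Finset.mem_univ _, by rw [hω]; exact z.2⟩, ?_⟩
    exact Subtype.ext hω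

lemma sum_singleton_ind {x : Config d A} (g : Config d A → ℝ)
    (ω₀ : {k // k ∈ Δ} → A) :
    ∑ ω : {k // k ∈ Δ} → A,
        ({patch Δ ω₀ x} : Set (Config d A)).indicator g (patch Δ ω x) =
      g (patch Δ ω₀ x) := by
  rw [Finset.sum_eq_single ω₀]
  · rw [Set.indicator_of_mem (Set.mem_singleton _)]
  · intro ω _ hne
    apply Set.indicator_of_notMem
    intro hmem
    exact hne (patch_inj (Set.mem_singleton_iff.1 hmem))
  · intro h; exact absurd (Finset.mem_univ _) h

lemma gammaFn_consist (hΛΔ : Λ ⊆ Δ) (x : Config d A) (S : Set ↥X) (n : ℕ) :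
    gammaFn d X f Δ S x n =
      ∑ z ∈ FsF X Δ x, gammaFn d X f Δ {z} x n * gammaFn d X f Λ S z.1 n := by
  classical
  set E : Config d A → ℝ := fun z => Real.exp (fnSum d f n z) with hE
  set ZΔ : ℝ := ∑ η : {k // k ∈ Δ} → A, X.indicator E (patch Δ η x) with hZΔ
  have hsingle : ∀ z : ↥X, gammaFn d X f Δ {z} x n =
      (∑ ω : {k // k ∈ Δ} → A,
        ({z.1} : Set (Config d A)).indicator E (patch Δ ω x)) / ZΔ := by
    intro z
    unfold gammaFn
    rw [Set.image_singleton]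
  unfold FsF
  rw [Finset.sum_image (fun a ha b hb hab => Subtype.ext
    (patch_inj (congrArg Subtype.val hab)))]
  have hterm : ∀ ω : {ω : {k // k ∈ Δ} → A //
      ω ∈ Finset.univ.filter (fun ω => patch Δ ω x ∈ X)},
      gammaFn d X f Δ {(⟨patch Δ ω.1 x, (Finset.mem_filter.1 ω.2).2⟩ : ↥X)} x n *
        gammaFn d X f Λ S (patch Δ ω.1 x) n =
      (X.indicator E (patch Δ ω.1 x) * gammaFn d X f Λ S (patch Δ ω.1 x) n) / ZΔ := by
    intro ω
    rw [hsingle]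
    rw [sum_singleton_ind E ω.1,
      Set.indicator_of_mem (Finset.mem_filter.1 ω.2).2, div_mul_eq_mul_div]
  rw [Finset.sum_congr rfl (fun ω _ => hterm ω)]
  rw [Finset.sum_attach _ (fun ω => (X.indicator E (patch Δ ω x) *
    gammaFn d X f Λ S (patch Δ ω x) n) / ZΔ)]
  rw [Finset.sum_filter_of_ne (by
    intro ω _ hne
    by_contra hmem
    apply hne
    rw [Set.indicator_of_notMem hmem, zero_mul, zero_div])]
  rw [hZΔ, hE]
  rw [← Finset.sum_div]
  rw [key_sum hΛΔ x S n]
  rfl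
lemma gamma_consist_sum {x : Config d A} (hne : X.Nonempty) (hf : MemSV d X f)
    (hinv : ∀ k : Fin d → ℤ, ∀ x ∈ X, shift k x ∈ X)
    (hΛΔ : Λ ⊆ Δ) (hx : x ∈ X) (S : Set ↥X) :
    gamma d X f Δ S x = ∑ z ∈ FsF X Δ x, gamma d X f Δ {z} x * gamma d X f Λ S z.1 := by
  have h1 := tendsto_gammaFn (Λ := Δ) hne hf hinv hx S
  have h2 : Tendsto (gammaFn d X f Δ S x) atTop
      (𝓝 (∑ z ∈ FsF X Δ x, Glim d X f Δ {z} x * Glim d X f Λ S z.1)) := by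
    have heq : gammaFn d X f Δ S x = fun n =>
        ∑ z ∈ FsF X Δ x, gammaFn d X f Δ {z} x n * gammaFn d X f Λ S z.1 n :=
      funext (fun n => gammaFn_consist hΛΔ x S n)
    rw [heq]
    exact tendsto_finset_sum _ (fun z _ =>
      ((tendsto_gammaFn hne hf hinv hx {z}).mul (tendsto_gammaFn hne hf hinv z.2 S)))
  rw [gamma_eq_Glim hne hf hinv hx S, tendsto_nhds_unique h1 h2]
  exact Finset.sum_congr rfl (fun z _ => by
    rw [gamma_eq_Glim hne hf hinv hx ({z} : Set ↥X), gamma_eq_Glim hne hf hinv z.2 S])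

lemma gamma_empty_of_disjoint {x : Config d A} {S : Set ↥X}
    (hS : ∀ ω : {k // k ∈ Δ} → A, patch Δ ω x ∉ Subtype.val '' S) :
    gamma d X f Δ S x = 0 := by
  have : gammaFn d X f Δ S x = fun _ => 0 := by
    funext n
    unfold gammaFn
    rw [Finset.sum_eq_zero (fun ω _ => Set.indicator_of_notMem (hS ω) _), zero_div]
  unfold gamma
  rw [this]
  exact Tendsto.limUnder_eq tendsto_const_nhds
end Consist


lemma integrable_dirac'' {α E : Type*} [MeasurableSpace α] [MeasurableSingletonClass α]
    [NormedAddCommGroup E] (g : α → E) (a : α) :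
    MeasureTheory.Integrable g (MeasureTheory.Measure.dirac a) := by
  constructor
  · refine (stronglyMeasurable_const (b := g a)).aestronglyMeasurable.congr ?_
    rw [MeasureTheory.ae_dirac_eq]
    exact Filter.eventually_pure.2 rfl
  · simp [MeasureTheory.HasFiniteIntegral, MeasureTheory.lintegral_dirac]

end AUX

/-- Consistency of the family `γ`: if `Λ ⊆ Δ` are nonempty finite sets,
then `∫ γ_Λ(S|y) γ_Δ(dy|x) = γ_Δ(S|x)` for every Borel `S` and every `x ∈ X`. -/
theorem gamma_consistency {d : ℕ} (hd : 1 ≤ d) {A : Type*} [Fintype A] [Nonempty A]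
    [TopologicalSpace A] [DiscreteTopology A] [MeasurableSpace A] [BorelSpace A]
    (X : Set (Config d A)) (hne : X.Nonempty) (hcl : IsClosed X)
    (hinv : ∀ k : Fin d → ℤ, ∀ x ∈ X, shift k x ∈ X)
    (f : Config d A → ℝ) (hf : MemSV d X f)
    (Λ Δ : Finset (Fin d → ℤ)) (hΛ : Λ.Nonempty) (hΔ : Δ.Nonempty) (hΛΔ : Λ ⊆ Δ)
    (x : Config d A) (hx : x ∈ X)
    (ν : Measure ↥X) (hνp : IsProbabilityMeasure ν)
    (hν : ∀ S : Set ↥X, MeasurableSet S → (ν S).toReal = gamma d X f Δ S x) :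
    ∀ S : Set ↥X, MeasurableSet S →
      ∫ y, gamma d X f Λ S y.1 ∂ν = gamma d X f Δ S x :=  by
  intro S hS
  classical
  haveI : MeasurableSingletonClass A := ⟨fun a => (isOpen_discrete {a}).measurableSet⟩
  haveI : IsProbabilityMeasure ν := hνp
  set Fs : Finset ↥X := FsF X Δ x with hFs
  have hsing : ∀ z : ↥X, MeasurableSet ({z} : Set ↥X) := fun z => measurableSet_singleton z
  have hFmeas : MeasurableSet (↑Fs : Set ↥X) := Fs.measurableSet
  -- ν is concentrated on Fs
  have hcompl : ν ((↑Fs : Set ↥X)ᶜ) = 0 := by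
    have h0 : gamma d X f Δ ((↑Fs : Set ↥X)ᶜ) x = 0 := by
      apply gamma_empty_of_disjoint
      rintro ω ⟨w, hw, hweq⟩
      exact hw (mem_FsF.2 ⟨ω, hweq.symm⟩)
    have h1 := hν _ hFmeas.compl
    rw [h0] at h1
    exact ((ENNReal.toReal_eq_zero_iff _).1 h1).resolve_right (measure_ne_top ν _)
  -- decomposition of ν as a finite combination of Dirac masses
  have hν_eq : ν = ∑ z ∈ Fs, ν {z} • MeasureTheory.Measure.dirac z := by
    ext s hs
    rw [← measure_inter_add_diff s hFmeas]
    have h2 : ν (s \ ↑Fs) = 0 :=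
      measure_mono_null (fun w hw => hw.2) hcompl
    rw [h2, add_zero]
    have hcup : s ∩ ↑Fs = ⋃ z ∈ Fs.filter (· ∈ s), ({z} : Set ↥X) := by
      ext w
      simp only [Set.mem_inter_iff, Set.mem_iUnion, Finset.mem_filter, Set.mem_singleton_iff,
        Finset.mem_coe]
      constructor
      · rintro ⟨hws, hwF⟩; exact ⟨w, ⟨hwF, hws⟩, rfl⟩
      · rintro ⟨z, ⟨hzF, hzs⟩, rfl⟩; exact ⟨hzs, hzF⟩
    rw [hcup, measure_biUnion_finset ?pd (fun b _ => hsing b)]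
    case pd =>
      intro a _ b _ hab
      simpa [Set.disjoint_singleton] using hab
    have hrhs : (∑ z ∈ Fs, ν {z} • MeasureTheory.Measure.dirac z) s
        = ∑ z ∈ Fs, ν {z} * (MeasureTheory.Measure.dirac z) s := by
      rw [MeasureTheory.Measure.coe_finset_sum]
      simp [Finset.sum_apply]
    rw [hrhs]
    rw [Finset.sum_filter]
    apply Finset.sum_congr rfl
    intro z _
    rw [MeasureTheory.Measure.dirac_apply' _ hs]
    by_cases hzs : z ∈ s
    · rw [if_pos hzs, Set.indicator_of_mem hzs, Pi.one_apply, mul_one]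
    · rw [if_neg hzs, Set.indicator_of_notMem hzs, mul_zero]
  -- compute the integral
  have hint : ∫ y, gamma d X f Λ S y.1 ∂ν
      = ∑ z ∈ Fs, (ν {z}).toReal * gamma d X f Λ S z.1 := by
    conv_lhs => rw [hν_eq]
    rw [MeasureTheory.integral_finset_sum_measure
      (fun z _ => (integrable_dirac'' _ _).smul_measure (measure_ne_top ν _))]
    apply Finset.sum_congr rfl
    intro z _
    rw [MeasureTheory.integral_smul_measure, MeasureTheory.integral_dirac, smul_eq_mul]
  rw [hint, gamma_consist_sum hne hf hinv hΛΔ hx S]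
  apply Finset.sum_congr rfl
  intro z _
  rw [hν _ (hsing z)]
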